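/- Let n, d ≥ 1 and let H ⊆ ℕ^n be the additive submonoid generated by all vectors a ∈ ℕ^n with coordinate sum d, except the vector m = (d,0,...,0). Then H is normal: if z ∈ ℤ^n lies in the group generated by H and k·z ∈ H for some positive integer k, then z ∈ H. -/

import Mathlib

open Finset

-- greedy lemma
lemma greedy {α : Type*} [DecidableEq α] (s : Finset α) (f : α → ℕ) :
    ∀ r, r ≤ ∑ i ∈ s, f i →
    ∃ g : α → ℕ, (∀ i, g i ≤ f i) ∧ (∀ i ∉ s, g i = 0) ∧ ∑ i ∈ s, g i = r := by
  induction s using Finset.induction_on with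
  | empty =>
    intro r hr
    simp only [Finset.sum_empty, Nat.le_zero] at hr
    exact ⟨fun _ => 0, fun _ => Nat.zero_le _, fun _ _ => rfl, by simp [hr]⟩
  | @insert a s ha ih =>
    intro r hr
    rw [Finset.sum_insert ha] at hr
    set u := min r (f a) with hu
    obtain ⟨g, hg1, hg2, hg3⟩ := ih (r - u) (by omega)
    refine ⟨Function.update g a u, ?_, ?_, ?_⟩
    · intro i
      rcases eq_or_ne i a with rfl | h
      · simp [Function.update_self]; omega
      · simp [Function.update_of_ne h]; exact hg1 i
    · intro i hi
      simp only [Finset.mem_insert, not_or] at hi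
      rw [Function.update_of_ne hi.1]
      exact hg2 i hi.2
    · rw [Finset.sum_insert ha, Function.update_self]
      have : ∑ i ∈ s, Function.update g a u i = ∑ i ∈ s, g i :=
        Finset.sum_congr rfl fun i hi => Function.update_of_ne (by rintro rfl; exact ha hi) _ _
      rw [this, hg3]
      omega

lemma cond_mem (n d : ℕ) (hd : 1 ≤ d) (i0 : Fin n) :
    ∀ t (x : Fin n → ℕ), (∑ i, x i) = t * d → t ≤ ∑ i ∈ Finset.univ.erase i0, x i →
      x ∈ AddSubmonoid.closure
        {a : Fin n → ℕ | (∑ i, a i) = d ∧ a ≠ fun i => if i = i0 then d else 0} := by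
  intro t
  induction t with
  | zero =>
    intro x hx _
    have hx0 : x = 0 := by
      funext i
      exact Finset.sum_eq_zero_iff.mp (by simpa using hx) i (Finset.mem_univ i)
    rw [hx0]; exact zero_mem _
  | succ t ih =>
    intro x hx hq
    set q := ∑ i ∈ Finset.univ.erase i0, x i with hqdef
    have hsplit : x i0 + q = ∑ i, x i := Finset.add_sum_erase _ _ (Finset.mem_univ i0)
    have he : (t + 1) * d = t * d + d := by ring
    have hqle : q ≤ ∑ i, x i := by omega
    have htd : t ≤ t * d := Nat.le_mul_of_pos_right t hd
    set r := max 1 (q - t * d) with hrdef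
    have hr1 : 1 ≤ r := le_max_left _ _
    have hr2 : q - t * d ≤ r := le_max_right _ _
    have hrd : r ≤ d := max_le hd (by omega)
    have hrq : r ≤ q - t := max_le (by omega) (by omega)
    obtain ⟨y, hy1, hy2, hy3⟩ := greedy (Finset.univ.erase i0) x r (by omega)
    set a : Fin n → ℕ := fun i => if i = i0 then d - r else y i with hadef
    have haerase : ∑ i ∈ Finset.univ.erase i0, a i = r := by
      rw [← hy3]
      refine Finset.sum_congr rfl fun i hi => ?_
      simp [hadef, (Finset.mem_erase.mp hi).1]
    have hasum : ∑ i, a i = d := by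
      rw [← Finset.add_sum_erase _ a (Finset.mem_univ i0), haerase]
      simp [hadef]; omega
    have hane : a ≠ fun i => if i = i0 then d else 0 := by
      intro h
      have : ∑ i ∈ Finset.univ.erase i0, a i = 0 := by
        rw [h]
        exact Finset.sum_eq_zero fun i hi => if_neg (Finset.mem_erase.mp hi).1
      omega
    have hale : ∀ i, a i ≤ x i := by
      intro i
      rcases eq_or_ne i i0 with rfl | h
      · simp only [hadef, if_pos rfl]; omega
      · simp only [hadef, if_neg h]; exact hy1 i
    set x' : Fin n → ℕ := fun i => x i - a i with hx'def
    have hsum' : ∑ i, x' i + ∑ i, a i = ∑ i, x i := by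
      rw [← Finset.sum_add_distrib]
      exact Finset.sum_congr rfl fun i _ => by have := hale i; simp [hx'def]; omega
    have herase' : ∑ i ∈ Finset.univ.erase i0, x' i + ∑ i ∈ Finset.univ.erase i0, a i
        = q := by
      rw [← Finset.sum_add_distrib]
      exact Finset.sum_congr rfl fun i _ => by have := hale i; simp [hx'def]; omega
    have hmem' : x' ∈ AddSubmonoid.closure
        {a : Fin n → ℕ | (∑ i, a i) = d ∧ a ≠ fun i => if i = i0 then d else 0} :=
      ih x' (by omega) (by omega)
    have hxeq : x = a + x' := by
      funext i
      have := hale i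
      simp [hx'def]; omega
    rw [hxeq]
    exact add_mem (AddSubmonoid.subset_closure ⟨hasum, hane⟩) hmem'

lemma mem_cond (n d : ℕ) (hd : 1 ≤ d) (i0 : Fin n) (x : Fin n → ℕ)
    (hx : x ∈ AddSubmonoid.closure
      {a : Fin n → ℕ | (∑ i, a i) = d ∧ a ≠ fun i => if i = i0 then d else 0}) :
    d ∣ (∑ i, x i) ∧ (∑ i, x i) ≤ d * ∑ i ∈ Finset.univ.erase i0, x i := by
  induction hx using AddSubmonoid.closure_induction with
  | mem a ha =>
    obtain ⟨hs, hne⟩ := ha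
    have hsplit : a i0 + ∑ i ∈ Finset.univ.erase i0, a i = ∑ i, a i :=
      Finset.add_sum_erase _ _ (Finset.mem_univ i0)
    have hqpos : 1 ≤ ∑ i ∈ Finset.univ.erase i0, a i := by
      by_contra h
      push_neg at h
      apply hne
      funext i
      rcases eq_or_ne i i0 with rfl | hi
      · simp; omega
      · have : a i = 0 := by
          have := Finset.sum_eq_zero_iff.mp (by omega :
            ∑ i ∈ Finset.univ.erase i0, a i = 0) i
            (Finset.mem_erase.mpr ⟨hi, Finset.mem_univ i⟩)
          exact this
        simp [hi, this]
    exact ⟨hs ▸ dvd_refl d, by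
      calc ∑ i, a i = d := hs
      _ ≤ d * ∑ i ∈ Finset.univ.erase i0, a i := Nat.le_mul_of_pos_right d hqpos⟩
  | zero => simp
  | add u v _ _ hu hv =>
    refine ⟨by simpa [Finset.sum_add_distrib] using dvd_add hu.1 hv.1, ?_⟩
    have := hu.2; have := hv.2
    simp only [Pi.add_apply, Finset.sum_add_distrib, Nat.mul_add]
    omega

lemma grp_dvd (n d : ℕ) (S : Set (Fin n → ℤ)) (hS : ∀ v ∈ S, (d : ℤ) ∣ ∑ i, v i)
    (z : Fin n → ℤ) (hz : z ∈ AddSubgroup.closure S) : (d : ℤ) ∣ ∑ i, z i := by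
  induction hz using AddSubgroup.closure_induction with
  | mem v hv => exact hS v hv
  | zero => simp
  | add u v _ _ hu hv => simpa [Finset.sum_add_distrib] using dvd_add hu hv
  | neg u _ hu => simpa using hu.neg_right

/-- Normality of the semigroup of the pinched Veronese ring `P_{n,d,(d,0,…,0)}`:
if `z` lies in the group generated by `H` (inside `ℤ^n`) and `k·z ∈ H` for some
`k > 0`, then `z ∈ H`. -/
theorem stmt_1 (n d : ℕ) (hn : 1 ≤ n) (hd : 1 ≤ d)
    (m : Fin n → ℕ) (hm : m = fun i => if i = (⟨0, hn⟩ : Fin n) then d else 0)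
    (A : Set (Fin n → ℕ)) (hA : A = {a | (∑ i, a i) = d ∧ a ≠ m})
    (ι : (Fin n → ℕ) → (Fin n → ℤ)) (hι : ι = fun a i => (a i : ℤ))
    (z : Fin n → ℤ) (hz : z ∈ AddSubgroup.closure (ι '' A))
    (k : ℕ) (hk : 0 < k)
    (hkz : (k : ℤ) • z ∈ ι '' ((AddSubmonoid.closure A : AddSubmonoid (Fin n → ℕ)) : Set (Fin n → ℕ))) :
    z ∈ ι '' ((AddSubmonoid.closure A : AddSubmonoid (Fin n → ℕ)) : Set (Fin n → ℕ)) := by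
  subst hm hι
  set i0 : Fin n := ⟨0, hn⟩
  obtain ⟨w, hw_mem, hw_eq⟩ := hkz
  have hwk : ∀ i, (w i : ℤ) = (k : ℤ) * z i := fun i => by
    have := congrFun hw_eq i
    simpa using this
  have hznn : ∀ i, 0 ≤ z i := by
    intro i
    have h1 : (0 : ℤ) ≤ (k : ℤ) * z i := by rw [← hwk i]; positivity
    have hk' : (0 : ℤ) < (k : ℤ) := by exact_mod_cast hk
    nlinarith
  set x : Fin n → ℕ := fun i => (z i).toNat with hxdef
  have hxz : ∀ i, (x i : ℤ) = z i := fun i => Int.toNat_of_nonneg (hznn i)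
  have hwx : ∀ i, w i = k * x i := by
    intro i
    have : (w i : ℤ) = ((k * x i : ℕ) : ℤ) := by
      push_cast
      rw [hwk i, hxz i]
    exact_mod_cast this
  -- divisibility from the group closure
  have hdvdZ : (d : ℤ) ∣ ∑ i, z i := by
    refine grp_dvd n d _ (fun v hv => ?_) z hz
    obtain ⟨a, ha, rfl⟩ := hv
    rw [hA] at ha
    have : ∑ i, ((a i : ℤ)) = ((d : ℕ) : ℤ) := by
      rw [← Nat.cast_sum, ha.1]
    exact this ▸ dvd_refl _
  have hdvd : d ∣ ∑ i, x i := by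
    have : (d : ℤ) ∣ ((∑ i, x i : ℕ) : ℤ) := by
      rw [Nat.cast_sum]
      simpa [hxz] using hdvdZ
    exact_mod_cast this
  -- inequality from w's membership
  have hw_cond := mem_cond n d hd i0 w (by rwa [hA] at hw_mem)
  have hwsum : ∑ i, w i = k * ∑ i, x i := by
    simp only [hwx, Finset.mul_sum]
  have hwq : ∑ i ∈ Finset.univ.erase i0, w i = k * ∑ i ∈ Finset.univ.erase i0, x i := by
    simp only [hwx, Finset.mul_sum]
  have hineq : ∑ i, x i ≤ d * ∑ i ∈ Finset.univ.erase i0, x i := by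
    have h2 := hw_cond.2
    rw [hwsum, hwq] at h2
    have : k * ∑ i, x i ≤ k * (d * ∑ i ∈ Finset.univ.erase i0, x i) := by
      calc k * ∑ i, x i ≤ d * (k * ∑ i ∈ Finset.univ.erase i0, x i) := h2
      _ = k * (d * ∑ i ∈ Finset.univ.erase i0, x i) := by ring
    exact Nat.le_of_mul_le_mul_left this hk
  set t := (∑ i, x i) / d with htdef
  have ht : ∑ i, x i = t * d := (Nat.div_mul_cancel hdvd).symm
  have htq : t ≤ ∑ i ∈ Finset.univ.erase i0, x i := by
    have h := Nat.div_le_div_right (c := d) hineq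
    rw [Nat.mul_div_cancel_left _ hd] at h
    rw [htdef]
    exact h
  have hxmem : x ∈ AddSubmonoid.closure A := by
    rw [hA]
    exact cond_mem n d hd i0 t x ht htq
  exact ⟨x, hxmem, funext fun i => hxz i⟩
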